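/- Let (V,q) be a nondegenerate quadratic space and τ an isometry. The following are equivalent: (1) (τ - id)² = 0; (2) R(τ) ⊆ K(τ); (3) the restriction of the polar form b_q to R(τ) is zero (i.e., q restricted to R(τ) is totally singular). -/

import Mathlib

theorem wall_stmt7 {F V : Type*} [Field F] [AddCommGroup V] [Module F V]
    [FiniteDimensional F V] (q : QuadraticForm F V)
    (hq : LinearMap.BilinForm.Nondegenerate (QuadraticMap.polarBilin q))
    (τ : V →ₗ[F] V) (hτ : ∀ x, q (τ x) = q x) :
    ((τ - LinearMap.id) ∘ₗ (τ - LinearMap.id) = 0 ↔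
      LinearMap.range (τ - LinearMap.id) ≤ LinearMap.ker (τ - LinearMap.id)) ∧
    (LinearMap.range (τ - LinearMap.id) ≤ LinearMap.ker (τ - LinearMap.id) ↔
      ∀ x y : V, QuadraticMap.polarBilin q (τ x - x) (τ y - y) = 0) := by
  have hb : ∀ a c, QuadraticMap.polarBilin q (τ a) (τ c)
      = QuadraticMap.polarBilin q a c := by
    intro a c
    simp only [QuadraticMap.polarBilin_apply_apply, QuadraticMap.polar, ← map_add, hτ]
  refine ⟨LinearMap.range_le_ker_iff.symm, ?_, ?_⟩
  · intro h x y
    have hz : τ (τ y - y) = τ y - y := by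
      have := h (LinearMap.mem_range_self (τ - LinearMap.id) y)
      simp only [LinearMap.mem_ker, LinearMap.sub_apply, LinearMap.id_apply,
        sub_eq_zero] at this
      exact this
    have key : QuadraticMap.polarBilin q (τ x) (τ y - y)
        = QuadraticMap.polarBilin q x (τ y - y) := by
      conv_lhs => rw [← hz]
      exact hb x (τ y - y)
    simp only [map_sub, LinearMap.sub_apply] at key ⊢
    linear_combination key
  · intro h w hw
    obtain ⟨y, rfl⟩ := hw
    rw [LinearMap.mem_ker]
    apply hq.1
    intro z
    simp only [LinearMap.sub_apply, LinearMap.id_apply]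
    have e1 := h (τ y - y) z
    have e2 := h y z
    have e3 := hb (τ y - y) z
    simp only [map_sub, LinearMap.sub_apply] at e1 e2 e3 ⊢
    linear_combination e3 - e1 - e2
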